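/- Increasing the battery capacity cannot increase energetic costs: if 0 < B ≤ B' then for all x, y ∈ ℝ ∪ {∞} one has x ⊕_{B'} y ≤ x ⊕_B y; consequently, for every path P, d_{B'}(P) ≤ d_B(P) (in particular, P traversable from a full battery of capacity B implies P traversable from a full battery of capacity B'), and for all vertices s, t, δ_{B'}(s, t) ≤ δ_B(s, t). -/
import Mathlib


open scoped Classical

/-- The clamped addition `x ⊕_B y = [x + y]₀ᴮ` on `ℝ ∪ {∞}` (modeled inside `EReal`;
inputs are never `⊥`). -/
noncomputable def eplus (B : ℝ) (x y : EReal) : EReal :=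
  if x + y < 0 then 0 else if x + y ≤ (B : EReal) then x + y else ⊤

/-- `batt B b cst i` is the charge `b_i` of the battery after traversing the first `i`
arcs of a path whose `i`-th arc (0-indexed) has cost `cst i`, starting from charge `b`. -/
noncomputable def batt (B b : ℝ) (cst : ℕ → ℝ) : ℕ → ℝ
  | 0 => b
  | i + 1 => min (batt B b cst i - cst i) B

/-- The path with arc costs `cst 0, …, cst (k-1)` is traversable from initial charge `b`. -/
def Trav (B b : ℝ) (cst : ℕ → ℝ) (k : ℕ) : Prop :=
  ∀ i, i < k → cst i ≤ batt B b cst i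

/-- The energetic cost `d_{B,b}(P) = b - b_k` of a path with arc costs
`cst 0, …, cst (k-1)`, or `∞` if not traversable from initial charge `b`. -/
noncomputable def dE (B b : ℝ) (cst : ℕ → ℝ) (k : ℕ) : EReal :=
  if Trav B b cst k then ((b - batt B b cst k : ℝ) : EReal) else ⊤

/-- `u 0, u 1, …, u k` is a path in the graph with arc relation `Arc`. -/
def IsPath {V : Type*} (Arc : V → V → Prop) (u : ℕ → V) (k : ℕ) : Prop :=
  ∀ i, i < k → Arc (u i) (u (i + 1))

/-- The energetic cost `δ_{B,b}(s,t)`: the minimum of `d_{B,b}(P)` over all `s`–`t`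
paths `P` (`∞` if there is none). -/
noncomputable def deltaE {V : Type*} (Arc : V → V → Prop) (c : V → V → ℝ)
    (B b : ℝ) (s t : V) : EReal :=
  sInf { x : EReal | ∃ (u : ℕ → V) (k : ℕ), IsPath Arc u k ∧ u 0 = s ∧ u k = t ∧
    x = dE B b (fun i => c (u i) (u (i + 1))) k }

/-- The standard distance `δ(s,t)`: the infimum of total costs of `s`–`t` paths. -/
noncomputable def distE {V : Type*} (Arc : V → V → Prop) (c : V → V → ℝ)
    (s t : V) : EReal :=
  sInf { x : EReal | ∃ (u : ℕ → V) (k : ℕ), IsPath Arc u k ∧ u 0 = s ∧ u k = t ∧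
    x = ((∑ i ∈ Finset.range k, c (u i) (u (i + 1)) : ℝ) : EReal) }

/-- The graph has no negative cycles. -/
def NoNegCycles {V : Type*} (Arc : V → V → Prop) (c : V → V → ℝ) : Prop :=
  ∀ (u : ℕ → V) (k : ℕ), IsPath Arc u k → u k = u 0 → 1 ≤ k →
    0 ≤ ∑ i ∈ Finset.range k, c (u i) (u (i + 1))

/-- increasing the battery capacity cannot increase energetic costs:
if `0 < B ≤ B'` then `x ⊕_{B'} y ≤ x ⊕_B y` for all `x, y ∈ ℝ ∪ {∞}`; consequently
`d_{B'}(P) ≤ d_B(P)` for every path `P` (in particular traversability from a full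
battery of capacity `B` implies traversability from a full battery of capacity `B'`),
and `δ_{B'}(s,t) ≤ δ_B(s,t)` for all vertices `s, t`. -/
theorem capacity_monotone {V : Type*} [Fintype V] (Arc : V → V → Prop)
    (c : V → V → ℝ) (B B' : ℝ) (hB : 0 < B) (hBB' : B ≤ B') :
    (∀ x y : EReal, x ≠ ⊥ → y ≠ ⊥ → eplus B' x y ≤ eplus B x y) ∧
    (∀ (u : ℕ → V) (k : ℕ), IsPath Arc u k →
      dE B' B' (fun i => c (u i) (u (i + 1))) k ≤ dE B B (fun i => c (u i) (u (i + 1))) k) ∧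
    (∀ (u : ℕ → V) (k : ℕ), IsPath Arc u k →
      Trav B B (fun i => c (u i) (u (i + 1))) k →
      Trav B' B' (fun i => c (u i) (u (i + 1))) k) ∧
    (∀ s t : V, deltaE Arc c B' B' s t ≤ deltaE Arc c B B s t) := by
  have hbatt : ∀ (cst : ℕ → ℝ) (i : ℕ),
      batt B B cst i + (B' - B) ≤ batt B' B' cst i := by
    intro cst i
    induction i with
    | zero => simp [batt]
    | succ n ih =>
      simp only [batt]
      have h1 : batt B B cst n - cst n + (B' - B) ≤ batt B' B' cst n - cst n := by
        linarith
      have h2 : B + (B' - B) ≤ B' := by linarith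
      rw [← min_add_add_right]
      exact min_le_min h1 h2
  have htrav : ∀ (cst : ℕ → ℝ) (k : ℕ), Trav B B cst k → Trav B' B' cst k := by
    intro cst k h i hik
    have := hbatt cst i
    have := h i hik
    linarith
  have hdE : ∀ (cst : ℕ → ℝ) (k : ℕ), dE B' B' cst k ≤ dE B B cst k := by
    intro cst k
    unfold dE
    by_cases h : Trav B B cst k
    · rw [if_pos h, if_pos (htrav cst k h)]
      have := hbatt cst k
      exact_mod_cast (by linarith : B' - batt B' B' cst k ≤ B - batt B B cst k)
    · rw [if_neg h]; exact le_top
  refine ⟨?_, fun u k _ => hdE _ k, fun u k _ h => htrav _ k h, ?_⟩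
  · intro x y _ _
    unfold eplus
    by_cases h1 : x + y < 0
    · simp [h1]
    · rw [if_neg h1, if_neg h1]
      by_cases h2 : x + y ≤ (B : EReal)
      · rw [if_pos h2, if_pos (h2.trans (by exact_mod_cast hBB'))]
      · rw [if_neg h2]
        by_cases h3 : x + y ≤ (B' : EReal)
        · rw [if_pos h3]; exact le_top
        · rw [if_neg h3]
  · intro s t
    unfold deltaE
    apply le_sInf
    rintro x ⟨u, k, hp, hs, ht, rfl⟩
    exact le_trans (sInf_le ⟨u, k, hp, hs, ht, rfl⟩) (hdE _ k)
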